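/- Let v be a unit vector in ℂ^d, ρ₀ = vv† the associated pure-state density matrix, and ρ any density matrix on ℂ^d. Then the trace distance satisfies 1 − √(Tr[ρ₀ρ]) ≤ d(ρ₀, ρ) := (1/2)‖ρ₀ − ρ‖₁, where ‖A‖₁ = Tr[√(A†A)] is the trace norm. (Lower Fuchs–van-de-Graaf inequality for a pure reference state.) -/

import Mathlib

open Matrix
open scoped ComplexOrder

section helpers
variable {n : Type*} [Fintype n] [DecidableEq n]

lemma trace_nonneg_of_psd {M : Matrix n n ℂ} (hM : M.PosSemidef) : 0 ≤ M.trace := by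
  rw [Matrix.trace]
  apply Finset.sum_nonneg
  intro i _
  exact hM.diag_nonneg

lemma trace_mul_nonneg_of_psd {A B : Matrix n n ℂ} (hA : A.PosSemidef) (hB : B.PosSemidef) :
    0 ≤ (A * B).trace := by
  have h1 : A * B = hA.1.cfc Real.sqrt * (hA.1.cfc Real.sqrt * B) := by
    have hsq : hA.1.cfc Real.sqrt * hA.1.cfc Real.sqrt = A := by
      rw [IsHermitian.cfc, ← map_mul, diagonal_mul_diagonal]
      conv_rhs => rw [hA.1.spectral_theorem]
      congr 2; funext i; simp only [Function.comp_apply]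
      rw [← RCLike.ofReal_mul, Real.mul_self_sqrt (hA.eigenvalues_nonneg i)]
    rw [← mul_assoc, hsq]
  rw [h1, Matrix.trace_mul_comm, mul_assoc]
  have hherm : (hA.1.cfc Real.sqrt).conjTranspose = hA.1.cfc Real.sqrt := by
    rw [← hA.1.cfc_eq]; exact cfc_predicate Real.sqrt A
  have : (hA.1.cfc Real.sqrt * B * (hA.1.cfc Real.sqrt)ᴴ).PosSemidef :=
    hB.mul_mul_conjTranspose_same (hA.1.cfc Real.sqrt)
  rw [hherm] at this
  rw [← mul_assoc]; exact trace_nonneg_of_psd this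

lemma conj_diag_psd (U : Matrix n n ℂ) (f : n → ℝ) (hf : ∀ i, 0 ≤ f i) :
    (U * diagonal (fun i => (f i : ℂ)) * star U).PosSemidef := by
  have hd : (diagonal (fun i => (f i : ℂ))).PosSemidef :=
    posSemidef_diagonal_iff.mpr fun i => by
      simpa using Complex.zero_le_real.mpr (hf i)
  simpa [Matrix.star_eq_conjTranspose] using hd.mul_mul_conjTranspose_same U

lemma conj_diag_trace {U : Matrix n n ℂ} (hU : U ∈ Matrix.unitaryGroup n ℂ) (f : n → ℝ) :
    (U * diagonal (fun i => (f i : ℂ)) * star U).trace = ((∑ i, f i : ℝ) : ℂ) := by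
  rw [Matrix.trace_mul_cycle, Matrix.mem_unitaryGroup_iff'.mp hU, one_mul,
    Matrix.trace_diagonal]
  push_cast
  rfl

lemma conj_diag_mul {U : Matrix n n ℂ} (hU : U ∈ Matrix.unitaryGroup n ℂ) (f g : n → ℝ) :
    (U * diagonal (fun i => (f i : ℂ)) * star U) * (U * diagonal (fun i => (g i : ℂ)) * star U)
      = U * diagonal (fun i => ((f i * g i : ℝ) : ℂ)) * star U := by
  have h1 : star U * U = 1 := Matrix.mem_unitaryGroup_iff'.mp hU
  simp only [mul_assoc]
  rw [← mul_assoc (star U) U, h1, one_mul, ← mul_assoc (diagonal _) (diagonal _),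
    diagonal_mul_diagonal]
  congr 2
  funext i
  push_cast
  rfl

lemma conj_diag_sub (U : Matrix n n ℂ) (f g : n → ℝ) :
    (U * diagonal (fun i => (f i : ℂ)) * star U) - (U * diagonal (fun i => (g i : ℂ)) * star U)
      = U * diagonal (fun i => ((f i - g i : ℝ) : ℂ)) * star U := by
  rw [← sub_mul, ← mul_sub, diagonal_sub]
  congr 2
  funext i
  push_cast
  rfl

end helpers

/-- The trace norm `‖A‖₁ = Tr √(A†A)` of a complex matrix. -/
noncomputable def traceNorm {d : ℕ} (A : Matrix (Fin d) (Fin d) ℂ) : ℝ :=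
  (((Matrix.posSemidef_conjTranspose_mul_self A).1.eigenvectorUnitary.1 *
      diagonal (((↑) : ℝ → ℂ) ∘ (√·) ∘ (Matrix.posSemidef_conjTranspose_mul_self A).1.eigenvalues) *
      (star (Matrix.posSemidef_conjTranspose_mul_self A).1.eigenvectorUnitary :
        Matrix (Fin d) (Fin d) ℂ)).trace).re

/-- Lower Fuchs–van-de-Graaf inequality for a pure reference state:
`1 - √(Tr[vv† ρ]) ≤ (1/2)‖vv† - ρ‖₁` for any unit vector `v` and density matrix `ρ`. -/
theorem one_sub_sqrt_fidelity_le_trace_distance {d : ℕ} (v : Fin d → ℂ)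
    (hv : star v ⬝ᵥ v = 1)
    (ρ : Matrix (Fin d) (Fin d) ℂ) (hρ : ρ.PosSemidef) (hρtr : ρ.trace = 1) :
    1 - Real.sqrt (((vecMulVec v (star v) * ρ).trace).re) ≤
      (1 / 2) * traceNorm (vecMulVec v (star v) - ρ) := by
  set ρ₀ : Matrix (Fin d) (Fin d) ℂ := vecMulVec v (star v) with hρ₀def
  have hv' : ∑ k, (star v) k * v k = 1 := hv
  -- basic facts about ρ₀
  have hconj : ρ₀ᴴ = ρ₀ := by
    ext i j
    simp [hρ₀def, vecMulVec_apply, conjTranspose_apply, mul_comm]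
  have hsq : ρ₀ * ρ₀ = ρ₀ := by
    ext i j
    have hptw : ∀ k, (v i * (star v) k) * (v k * (star v) j)
        = (v i * (star v) j) * ((star v) k * v k) := fun k => by ring
    simp only [hρ₀def, mul_apply, vecMulVec_apply, hptw, ← Finset.mul_sum, hv', mul_one]
  have htr : ρ₀.trace = 1 := by
    have : ρ₀.trace = v ⬝ᵥ star v := by
      simp [hρ₀def, Matrix.trace, Matrix.diag, vecMulVec_apply, dotProduct]
    rw [this, dotProduct_comm, hv]
  have hρ₀psd : ρ₀.PosSemidef := by
    have h : ρ₀ = ρ₀ᴴ * ρ₀ := by rw [hconj, hsq]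
    rw [h]; exact posSemidef_conjTranspose_mul_self ρ₀
  have h1sub : (1 - ρ₀).PosSemidef := by
    have hc : (1 - ρ₀)ᴴ = 1 - ρ₀ := by rw [conjTranspose_sub, conjTranspose_one, hconj]
    have h : 1 - ρ₀ = (1 - ρ₀)ᴴ * (1 - ρ₀) := by
      rw [hc, sub_mul, one_mul, mul_sub, mul_one, hsq]
      simp
    rw [h]; exact posSemidef_conjTranspose_mul_self _
  -- spectral decomposition of A = ρ₀ - ρ
  have hAh : (ρ₀ - ρ).IsHermitian := hρ₀psd.1.sub hρ.1
  set U : Matrix (Fin d) (Fin d) ℂ := (hAh.eigenvectorUnitary : Matrix (Fin d) (Fin d) ℂ)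
    with hUdef
  have hU : U ∈ Matrix.unitaryGroup (Fin d) ℂ := (hAh.eigenvectorUnitary).2
  set μ : Fin d → ℝ := hAh.eigenvalues with hμdef
  have hspec : ρ₀ - ρ = U * diagonal (fun i => ((μ i : ℝ) : ℂ)) * star U := by
    have := hAh.spectral_theorem
    rw [Unitary.conjStarAlgAut_apply] at this
    exact this
  set p : Fin d → ℝ := fun i => max (μ i) 0 with hpdef
  set q : Fin d → ℝ := fun i => max (-μ i) 0 with hqdef
  set P : Matrix (Fin d) (Fin d) ℂ := U * diagonal (fun i => ((p i : ℝ) : ℂ)) * star U with hPdef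
  set N : Matrix (Fin d) (Fin d) ℂ := U * diagonal (fun i => ((q i : ℝ) : ℂ)) * star U with hNdef
  have hPpsd : P.PosSemidef := conj_diag_psd U p fun i => le_max_right _ _
  have hNpsd : N.PosSemidef := conj_diag_psd U q fun i => le_max_right _ _
  have hAPN : ρ₀ - ρ = P - N := by
    rw [hPdef, hNdef, conj_diag_sub, hspec]
    congr 2
    funext i
    rw [hpdef, hqdef]
    norm_num [max_zero_sub_max_neg_zero_eq_self]
  -- trace of A is zero, so ∑ μ = 0
  have htrA : (ρ₀ - ρ).trace = 0 := by rw [trace_sub, htr, hρtr, sub_self]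
  have hsum : ∑ i, μ i = 0 := by
    have := htrA
    rw [hspec, conj_diag_trace hU] at this
    exact_mod_cast this
  have htrP : P.trace = ((∑ i, p i : ℝ) : ℂ) := conj_diag_trace hU p
  have hsump : ∑ i, p i = (1 / 2) * ∑ i, |μ i| := by
    have h1 : ∑ i, p i + ∑ i, q i = ∑ i, |μ i| := by
      rw [← Finset.sum_add_distrib]
      exact Finset.sum_congr rfl fun i _ => max_zero_add_max_neg_zero_eq_abs_self _
    have h2 : ∑ i, p i - ∑ i, q i = 0 := by
      rw [← Finset.sum_sub_distrib]
      rw [show ∑ i, (p i - q i) = ∑ i, μ i from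
        Finset.sum_congr rfl fun i _ => max_zero_sub_max_neg_zero_eq_self _, hsum]
    linarith
  -- trace norm of A
  have htn : traceNorm (ρ₀ - ρ) = ∑ i, |μ i| := by
    set S : Matrix (Fin d) (Fin d) ℂ := U * diagonal (fun i => ((|μ i| : ℝ) : ℂ)) * star U
      with hSdef
    have hSpsd : S.PosSemidef := conj_diag_psd U _ fun i => abs_nonneg _
    have hS2 : S ^ 2 = (ρ₀ - ρ)ᴴ * (ρ₀ - ρ) := by
      rw [pow_two, hSdef, conj_diag_mul hU, hAh.eq, hspec, conj_diag_mul hU]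
      have habs : (fun i => ((|μ i| * |μ i| : ℝ) : ℂ)) = fun i => ((μ i * μ i : ℝ) : ℂ) := by
        funext i; rw [abs_mul_abs_self]
      rw [habs]
    have hSsqrt : S = (Matrix.posSemidef_conjTranspose_mul_self (ρ₀ - ρ)).1.eigenvectorUnitary.1 *
        diagonal (((↑) : ℝ → ℂ) ∘ (√·) ∘
          (Matrix.posSemidef_conjTranspose_mul_self (ρ₀ - ρ)).1.eigenvalues) *
        (star (Matrix.posSemidef_conjTranspose_mul_self (ρ₀ - ρ)).1.eigenvectorUnitary :
          Matrix (Fin d) (Fin d) ℂ) := by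
      have hB := (Matrix.posSemidef_conjTranspose_mul_self (ρ₀ - ρ)).1
      have e1 : hB.eigenvectorUnitary.1 * diagonal (((↑) : ℝ → ℂ) ∘ (√·) ∘ hB.eigenvalues) *
          (star hB.eigenvectorUnitary : Matrix (Fin d) (Fin d) ℂ) = hB.cfc Real.sqrt := rfl
      rw [e1, ← hB.cfc_eq, hAh.eq, ← pow_two,
        ← cfc_comp_pow Real.sqrt 2 (ρ₀ - ρ) (ha := hAh.isSelfAdjoint),
        cfc_congr (g := abs) (fun x _ => Real.sqrt_sq_eq_abs x), hAh.cfc_eq, IsHermitian.cfc,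
        Unitary.conjStarAlgAut_apply]
      rfl
    rw [traceNorm, ← hSsqrt, hSdef, conj_diag_trace hU, Complex.ofReal_re]
  -- fidelity bounds
  set F : ℂ := (ρ₀ * ρ).trace with hFdef
  have hF0 : 0 ≤ F := trace_mul_nonneg_of_psd hρ₀psd hρ
  have hF1 : F ≤ 1 := by
    have h := trace_mul_nonneg_of_psd h1sub hρ
    rw [sub_mul, one_mul, trace_sub, hρtr] at h
    exact sub_nonneg.mp h
  -- key complex inequality
  have hkey : 1 - F ≤ P.trace := by
    have ha : (ρ₀ * (ρ₀ - ρ)).trace = 1 - F := by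
      rw [mul_sub, trace_sub, hsq, htr, hFdef]
    have hb : (ρ₀ * (ρ₀ - ρ)).trace = (ρ₀ * P).trace - (ρ₀ * N).trace := by
      rw [hAPN, mul_sub, trace_sub]
    have h₁ : 0 ≤ (ρ₀ * N).trace := trace_mul_nonneg_of_psd hρ₀psd hNpsd
    have h₂ : 0 ≤ ((1 - ρ₀) * P).trace := trace_mul_nonneg_of_psd h1sub hPpsd
    rw [sub_mul, one_mul, trace_sub] at h₂
    calc 1 - F = (ρ₀ * P).trace - (ρ₀ * N).trace := by rw [← ha, hb]
      _ ≤ (ρ₀ * P).trace := by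
          have := sub_le_self (ρ₀ * P).trace h₁
          exact this
      _ ≤ P.trace := sub_nonneg.mp h₂
  -- pass to real parts
  have hkeyre : 1 - F.re ≤ ∑ i, p i := by
    have := (Complex.le_def.mp hkey).1
    rw [htrP] at this
    simpa using this
  have hFre0 : 0 ≤ F.re := (Complex.le_def.mp hF0).1
  have hFre1 : F.re ≤ 1 := by simpa using (Complex.le_def.mp hF1).1
  have hsqrt : F.re ≤ Real.sqrt F.re := by
    calc F.re = Real.sqrt (F.re * F.re) := (Real.sqrt_mul_self hFre0).symm
      _ ≤ Real.sqrt F.re := Real.sqrt_le_sqrt (by nlinarith)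
  have hgoal : ((vecMulVec v (star v) * ρ).trace).re = F.re := by rw [hFdef, hρ₀def]
  rw [hgoal]
  have : traceNorm (vecMulVec v (star v) - ρ) = ∑ i, |μ i| := by rw [← hρ₀def]; exact htn
  rw [this]
  linarith [hkeyre, hsump.symm]
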